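/- arXiv:1705.10396 — 2 statements merged into one kernel-verified Lean document; each statement's English description precedes it below -/
import Mathlib

section
/- Let d_1 ≥ d_2 ≥ ... ≥ d_n ≥ 0 be reals and x_1,...,x_n ∈ [0,1] with Σ_{i=1}^n x_i ≥ n − k for some integer k ≤ n, and suppose Σ_{i=1}^n d_i x_i ≤ b. Then Σ_{i=k+1}^n d_i ≤ b. -/
/-- If `d 0 ≥ d 1 ≥ ... ≥ d (n-1) ≥ 0`, `x i ∈ [0,1]` with `∑ x i ≥ n - k`,
and `∑ d i * x i ≤ b`, then the total demand of all but the `k`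
largest-demand items is at most `b`:  `∑_{i ≥ k} d i ≤ b`. -/
theorem stmt5 {n : ℕ} (k : ℕ) (hk : k ≤ n)
    (d : Fin n → ℝ) (hmono : ∀ i j : Fin n, i ≤ j → d j ≤ d i)
    (hd0 : ∀ i, 0 ≤ d i)
    (x : Fin n → ℝ) (hx0 : ∀ i, 0 ≤ x i) (hx1 : ∀ i, x i ≤ 1)
    (hxsum : (n : ℝ) - k ≤ ∑ i, x i)
    (b : ℝ) (hload : ∑ i, d i * x i ≤ b) :
    ∑ i ∈ Finset.univ.filter (fun i : Fin n => k ≤ (i : ℕ)), d i ≤ b := by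
  rcases eq_or_lt_of_le hk with heq | hkn
  · have he : Finset.univ.filter (fun i : Fin n => k ≤ (i : ℕ)) = ∅ := by
      ext i
      simp only [Finset.mem_filter, Finset.mem_univ, true_and, Finset.notMem_empty, iff_false]
      rw [heq]
      exact Nat.not_le.mpr i.isLt
    rw [he, Finset.sum_empty]
    exact le_trans (Finset.sum_nonneg fun i _ => mul_nonneg (hd0 i) (hx0 i)) hload
  · set κ : Fin n := ⟨k, hkn⟩ with hκ
    have hB : Finset.univ.filter (fun i : Fin n => k ≤ (i : ℕ)) = Finset.Ici κ := by
      ext i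
      simp [Fin.le_def, hκ]
    rw [hB]
    set B := Finset.Ici κ with hBdef
    -- split of sums
    have hsplitx : ∑ i ∈ Bᶜ, x i + ∑ i ∈ B, x i = ∑ i, x i :=
      Finset.sum_compl_add_sum B x
    have hsplitdx : ∑ i ∈ Bᶜ, d i * x i + ∑ i ∈ B, d i * x i = ∑ i, d i * x i :=
      Finset.sum_compl_add_sum B (fun i => d i * x i)
    -- cardinality of B
    have hcard : (B.card : ℝ) = (n : ℝ) - k := by
      rw [hBdef, Fin.card_Ici]
      push_cast [Nat.cast_sub hk]
      simp [hκ]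
      exact Nat.cast_sub hk
    -- step 1 : ∑_B d i (1 - x i) ≤ d κ * ∑_B (1 - x i)
    have h2 : ∑ i ∈ B, d i * (1 - x i) ≤ d κ * ∑ i ∈ B, (1 - x i) := by
      rw [Finset.mul_sum]
      refine Finset.sum_le_sum fun i hi => ?_
      have hik : κ ≤ i := by simpa [hBdef] using hi
      exact mul_le_mul_of_nonneg_right (hmono κ i hik) (by linarith [hx1 i])
    -- step 2 : ∑_B (1 - x i) ≤ ∑_{Bᶜ} x i
    have h3 : ∑ i ∈ B, (1 - x i) ≤ ∑ i ∈ Bᶜ, x i := by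
      rw [Finset.sum_sub_distrib, Finset.sum_const, nsmul_eq_mul, mul_one, hcard]
      linarith
    -- step 3 : d κ * ∑_{Bᶜ} x i ≤ ∑_{Bᶜ} d i * x i
    have h5 : d κ * ∑ i ∈ Bᶜ, x i ≤ ∑ i ∈ Bᶜ, d i * x i := by
      rw [Finset.mul_sum]
      refine Finset.sum_le_sum fun i hi => ?_
      have hik : i ≤ κ := by
        have : ¬ κ ≤ i := by simpa [hBdef] using hi
        exact le_of_lt (lt_of_not_ge this)
      exact mul_le_mul_of_nonneg_right (hmono i κ hik) (hx0 i)
    have hκ0 : 0 ≤ d κ := hd0 κ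
    have hsub : ∑ i ∈ B, d i - ∑ i ∈ B, d i * x i = ∑ i ∈ B, d i * (1 - x i) := by
      rw [← Finset.sum_sub_distrib]
      congr 1
      ext i
      ring
    nlinarith [mul_le_mul_of_nonneg_left h3 hκ0]
end

section
/- In the planar-SAT reduction graph: for a boolean formula Φ = (X, C), construct the demand matching instance with vertices {u_c : c ∈ C} ∪ {t_x, f_x, v_x : x ∈ X}; edges v_x t_x and v_x f_x of demand and profit D for each x; unit demand/profit edge u_c t_x for each clause c containing literal ¬x; unit demand/profit edge u_c f_x for each clause c containing literal x; capacity 1 on each u_c and capacity D on each t_x, f_x, v_x. Then Φ is satisfiable if and only if the maximum profit of a feasible demand matching equals D·|X| + |C|. -/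
/-- Vertices of the reduction instance: a vertex `u_c` for each clause `c`,
and vertices `t_x` (= `(x,0)`), `f_x` (= `(x,1)`), `v_x` (= `(x,2)`) for each
variable `x`. -/
abbrev RedVtx (X C : Type*) := C ⊕ (X × Fin 3)

/-- Edges of the reduction instance: an edge `v_x t_x` (= `inl (x, true)`)
and `v_x f_x` (= `inl (x, false)`) for every variable `x`; a unit edge
`u_c f_x` for every clause `c` containing the literal `x` positively; and a
unit edge `u_c t_x` for every clause `c` containing the literal `¬x`. -/
def RedEdge (X C : Type*) (pos neg : C → Finset X) :=
  (X × Bool) ⊕ ({q : C × X // q.2 ∈ pos q.1} ⊕ {q : C × X // q.2 ∈ neg q.1})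

/-- Demand placed by an edge on a vertex (0 on non-endpoints).  The edges
`v_x t_x`, `v_x f_x` have demand `D` at both endpoints; clause edges have
unit demands. -/
def redDem {X C : Type*} [DecidableEq X] [DecidableEq C]
    (pos neg : C → Finset X) (D : ℕ) :
    RedEdge X C pos neg → RedVtx X C → ℕ
  | Sum.inl (x, b), w =>
      if w = Sum.inr (x, 2) ∨ w = Sum.inr (x, if b then 0 else 1) then D else 0
  | Sum.inr (Sum.inl q), w =>
      if w = Sum.inl q.1.1 ∨ w = Sum.inr (q.1.2, 1) then 1 else 0
  | Sum.inr (Sum.inr q), w =>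
      if w = Sum.inl q.1.1 ∨ w = Sum.inr (q.1.2, 0) then 1 else 0

/-- Capacities: 1 on each clause vertex `u_c`, `D` on each of `t_x, f_x, v_x`. -/
def redCap {X C : Type*} (D : ℕ) : RedVtx X C → ℕ
  | Sum.inl _ => 1
  | Sum.inr _ => D

/-- Profits: `D` for the edges `v_x t_x`, `v_x f_x`, 1 for clause edges. -/
def redProfit {X C : Type*} (pos neg : C → Finset X) (D : ℕ) :
    RedEdge X C pos neg → ℕ
  | Sum.inl _ => D
  | Sum.inr _ => 1

/-- A demand matching: at each vertex the total demand of chosen edges is at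
most the capacity. -/
def redFeasible {X C : Type*} [DecidableEq X] [DecidableEq C]
    (pos neg : C → Finset X) (D : ℕ) (F : Finset (RedEdge X C pos neg)) : Prop :=
  ∀ w : RedVtx X C, ∑ e ∈ F, redDem pos neg D e w ≤ redCap D w

section Aux

variable {X C : Type*} [DecidableEq X] [DecidableEq C] {pos neg : C → Finset X} {D : ℕ}

instance : DecidableEq (RedEdge X C pos neg) := by
  unfold RedEdge; exact inferInstance

def varOf : RedEdge X C pos neg → X
  | Sum.inl (x, _) => x
  | Sum.inr (Sum.inl q) => q.1.2
  | Sum.inr (Sum.inr q) => q.1.2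

def clOpt : RedEdge X C pos neg → Option C
  | Sum.inl _ => none
  | Sum.inr (Sum.inl q) => some q.1.1
  | Sum.inr (Sum.inr q) => some q.1.1

lemma pair_le {F : Finset (RedEdge X C pos neg)} (hF : redFeasible pos neg D F)
    {e1 e2 : RedEdge X C pos neg} (h1 : e1 ∈ F) (h2 : e2 ∈ F) (hne : e1 ≠ e2)
    (w : RedVtx X C) :
    redDem pos neg D e1 w + redDem pos neg D e2 w ≤ redCap D w := by
  classical
  calc redDem pos neg D e1 w + redDem pos neg D e2 w
      = ∑ e ∈ {e1, e2}, redDem pos neg D e w :=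
        (Finset.sum_pair (f := fun e => redDem pos neg D e w) hne).symm
    _ ≤ ∑ e ∈ F, redDem pos neg D e w :=
        Finset.sum_le_sum_of_subset (by simp [Finset.insert_subset_iff, h1, h2])
    _ ≤ redCap D w := hF w

lemma left_unique (hD1 : 1 ≤ D) {F : Finset (RedEdge X C pos neg)}
    (hF : redFeasible pos neg D F) {x : X} {b1 b2 : Bool}
    (h1 : Sum.inl (x, b1) ∈ F) (h2 : Sum.inl (x, b2) ∈ F) : b1 = b2 := by
  by_contra hne
  have hne' : (Sum.inl (x, b1) : RedEdge X C pos neg) ≠ Sum.inl (x, b2) := by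
    simp [hne]
  have h := pair_le hF h1 h2 hne' (Sum.inr (x, 2))
  simp [redDem, redCap] at h
  omega

lemma dem_clause {e : RedEdge X C pos neg} {c : C} (hc : clOpt e = some c) :
    redDem pos neg D e (Sum.inl c) = 1 := by
  match e with
  | Sum.inl _ => simp [clOpt] at hc
  | Sum.inr (Sum.inl q) =>
      simp only [clOpt, Option.some.injEq] at hc
      simp [redDem, hc]
  | Sum.inr (Sum.inr q) =>
      simp only [clOpt, Option.some.injEq] at hc
      simp [redDem, hc]

lemma clause_unique {F : Finset (RedEdge X C pos neg)}
    (hF : redFeasible pos neg D F) {e1 e2 : RedEdge X C pos neg} {c : C}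
    (h1 : e1 ∈ F) (h2 : e2 ∈ F) (hc1 : clOpt e1 = some c) (hc2 : clOpt e2 = some c) :
    e1 = e2 := by
  by_contra hne
  have h := pair_le hF h1 h2 hne (Sum.inl c)
  rw [dem_clause hc1, dem_clause hc2] at h
  simp [redCap] at h

lemma left_injOn (hD1 : 1 ≤ D) {F : Finset (RedEdge X C pos neg)}
    (hF : redFeasible pos neg D F) [DecidablePred (fun e : RedEdge X C pos neg => e.isLeft = true)] :
    Set.InjOn varOf ((F.filter (fun e => e.isLeft = true) : Finset (RedEdge X C pos neg)) : Set (RedEdge X C pos neg)) := by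
  intro e1 he1 e2 he2 hv
  simp only [Finset.coe_filter, Set.mem_setOf_eq] at he1 he2
  obtain ⟨⟨x1, b1⟩, rfl⟩ := Sum.isLeft_iff.mp he1.2
  obtain ⟨⟨x2, b2⟩, rfl⟩ := Sum.isLeft_iff.mp he2.2
  simp only [varOf] at hv
  subst hv
  have := left_unique hD1 hF he1.1 he2.1
  rw [this]

lemma right_some {e : RedEdge X C pos neg} (he : ¬ e.isLeft = true) :
    ∃ c, clOpt e = some c := by
  match e with
  | Sum.inl _ => simp at he
  | Sum.inr (Sum.inl q) => exact ⟨q.1.1, rfl⟩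
  | Sum.inr (Sum.inr q) => exact ⟨q.1.1, rfl⟩

lemma right_injOn {F : Finset (RedEdge X C pos neg)}
    (hF : redFeasible pos neg D F) [DecidablePred (fun e : RedEdge X C pos neg => ¬ e.isLeft = true)] :
    Set.InjOn clOpt ((F.filter (fun e => ¬ e.isLeft = true) : Finset (RedEdge X C pos neg)) : Set (RedEdge X C pos neg)) := by
  intro e1 he1 e2 he2 hv
  simp only [Finset.coe_filter, Set.mem_setOf_eq] at he1 he2
  obtain ⟨c1, hc1⟩ := right_some he1.2
  obtain ⟨c2, hc2⟩ := right_some he2.2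
  rw [hc1, hc2] at hv
  cases hv
  exact clause_unique hF he1.1 he2.1 hc1 hc2

variable [Fintype X] [Fintype C]

lemma card_left_le (hD1 : 1 ≤ D) {F : Finset (RedEdge X C pos neg)}
    (hF : redFeasible pos neg D F) [DecidablePred (fun e : RedEdge X C pos neg => e.isLeft = true)] :
    (F.filter (fun e => e.isLeft = true)).card ≤ Fintype.card X := by
  rw [← Finset.card_univ]
  exact Finset.card_le_card_of_injOn varOf (fun _ _ => Finset.mem_univ _) (left_injOn hD1 hF)

lemma card_right_le {F : Finset (RedEdge X C pos neg)}
    (hF : redFeasible pos neg D F) [DecidablePred (fun e : RedEdge X C pos neg => ¬ e.isLeft = true)] :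
    (F.filter (fun e => ¬ e.isLeft = true)).card ≤ Fintype.card C := by
  have h : (F.filter (fun e => ¬ e.isLeft = true)).card
      ≤ ((Finset.univ : Finset C).image some).card := by
    apply Finset.card_le_card_of_injOn clOpt ?_ (right_injOn hF)
    intro e he
    obtain ⟨c, hc⟩ := right_some (Finset.mem_filter.mp he).2
    rw [hc]
    exact Finset.mem_image_of_mem _ (Finset.mem_univ c)
  rwa [Finset.card_image_of_injective _ (Option.some_injective C), Finset.card_univ] at h

lemma sum_profit_eq {F : Finset (RedEdge X C pos neg)}
    [DecidablePred (fun e : RedEdge X C pos neg => e.isLeft = true)] :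
    ∑ e ∈ F, redProfit pos neg D e
      = D * (F.filter (fun e => e.isLeft = true)).card
        + (F.filter (fun e => ¬ e.isLeft = true)).card := by
  classical
  rw [← Finset.sum_filter_add_sum_filter_not F (fun e => e.isLeft = true)]
  congr 1
  · have h : ∀ e ∈ F.filter (fun e => e.isLeft = true), redProfit pos neg D e = D := by
      intro e he
      obtain ⟨a, rfl⟩ := Sum.isLeft_iff.mp (Finset.mem_filter.mp he).2
      rfl
    rw [Finset.sum_congr rfl h, Finset.sum_const, smul_eq_mul, mul_comm]
  · have h : ∀ e ∈ F.filter (fun e => ¬ e.isLeft = true), redProfit pos neg D e = 1 := by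
      intro e he
      have h2 := (Finset.mem_filter.mp he).2
      match e with
      | Sum.inl _ => simp at h2
      | Sum.inr _ => rfl
    rw [Finset.sum_congr rfl h, Finset.sum_const, smul_eq_mul, mul_one]

lemma profit_le (hD1 : 1 ≤ D) {F : Finset (RedEdge X C pos neg)}
    (hF : redFeasible pos neg D F) :
    ∑ e ∈ F, redProfit pos neg D e ≤ D * Fintype.card X + Fintype.card C := by
  classical
  rw [sum_profit_eq]
  exact Nat.add_le_add (Nat.mul_le_mul_left _ (card_left_le hD1 hF)) (card_right_le hF)

end Aux

/-- The formula `Φ` (clause `c` contains the variables of `pos c` positively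
and those of `neg c` negatively) is satisfiable iff the maximum profit of a
feasible demand matching in the reduction instance equals `D·|X| + |C|`,
where `D` bounds the number of clauses containing any single variable. -/
theorem stmt17 {X C : Type*} [Fintype X] [Fintype C] [DecidableEq X] [DecidableEq C]
    (pos neg : C → Finset X) (D : ℕ) (hD1 : 1 ≤ D)
    (hD : ∀ x : X, (Finset.univ.filter fun c : C => x ∈ pos c ∨ x ∈ neg c).card ≤ D) :
    (∃ σ : X → Bool, ∀ c : C,
        (∃ x ∈ pos c, σ x = true) ∨ (∃ x ∈ neg c, σ x = false))
    ↔ IsGreatest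
        {n : ℕ | ∃ F : Finset (RedEdge X C pos neg),
          redFeasible pos neg D F ∧ ∑ e ∈ F, redProfit pos neg D e = n}
        (D * Fintype.card X + Fintype.card C) := by
  constructor
  · rintro ⟨σ, hσ⟩
    constructor
    · -- membership : construct an optimal feasible set
      have hwit : ∀ c : C, ∃ e : RedEdge X C pos neg,
          (∃ (x : X) (h : x ∈ pos c), σ x = true ∧ e = Sum.inr (Sum.inl ⟨(c, x), h⟩)) ∨
          (∃ (x : X) (h : x ∈ neg c), σ x = false ∧ e = Sum.inr (Sum.inr ⟨(c, x), h⟩)) := by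
        intro c
        rcases hσ c with ⟨x, hx, hσx⟩ | ⟨x, hx, hσx⟩
        · exact ⟨_, Or.inl ⟨x, hx, hσx, rfl⟩⟩
        · exact ⟨_, Or.inr ⟨x, hx, hσx, rfl⟩⟩
      choose wf hwf using hwit
      have hA_inj : Function.Injective (fun x : X => (Sum.inl (x, σ x) : RedEdge X C pos neg)) := by
        intro a b h
        simpa [varOf] using congrArg varOf h
      have hclwf : ∀ c, clOpt (wf c) = some c := by
        intro c
        rcases hwf c with ⟨x, h, hs, he⟩ | ⟨x, h, hs, he⟩ <;> rw [he] <;> rfl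
      have hB_inj : Function.Injective wf := by
        intro c1 c2 h
        have h2 := congrArg clOpt h
        rw [hclwf, hclwf] at h2
        exact Option.some_injective _ h2
      set A : Finset (RedEdge X C pos neg) :=
        Finset.univ.image (fun x : X => (Sum.inl (x, σ x) : RedEdge X C pos neg)) with hA
      set B : Finset (RedEdge X C pos neg) := Finset.univ.image wf with hB
      have hdisj : Disjoint A B := by
        rw [Finset.disjoint_left]
        intro e heA heB
        rw [hA] at heA; replace heA := Finset.mem_image.mp heA
        rw [hB, Finset.mem_image] at heB
        obtain ⟨x, -, rfl⟩ := heA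
        obtain ⟨c, -, hc⟩ := heB
        rcases hwf c with ⟨x', h', hs', he'⟩ | ⟨x', h', hs', he'⟩ <;> rw [he'] at hc <;>
          exact absurd hc (by simp)
      refine ⟨A ∪ B, ?_, ?_⟩
      · -- feasibility
        intro w
        rw [Finset.sum_union hdisj]
        have eA : ∑ e ∈ A, redDem pos neg D e w
            = ∑ x : X, redDem pos neg D (Sum.inl (x, σ x)) w := by
          rw [hA]; exact Finset.sum_image (fun a _ b _ h => hA_inj h)
        have eB : ∑ e ∈ B, redDem pos neg D e w
            = ∑ c : C, redDem pos neg D (wf c) w := by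
          rw [hB]; exact Finset.sum_image (fun a _ b _ h => hB_inj h)
        rw [eA, eB]
        rcases w with c0 | ⟨x0, i⟩
        · have hL : ∀ x : X,
              redDem pos neg D (Sum.inl (x, σ x)) (Sum.inl c0) = 0 := by
            intro x; simp [redDem]
          have hR : ∀ c : C,
              redDem pos neg D (wf c) (Sum.inl c0) = if c = c0 then 1 else 0 := by
            intro c
            rcases hwf c with ⟨x, h, hs, he⟩ | ⟨x, h, hs, he⟩ <;> rw [he] <;>
              simp [redDem, eq_comm]
          simp only [hL, hR, Finset.sum_const_zero, Finset.sum_ite_eq', Finset.mem_univ,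
            if_true, zero_add]
          simp [redCap]
        · fin_cases i
        -- i = 0 : vertex t_{x0}
          · show ∑ x : X, redDem pos neg D (Sum.inl (x, σ x)) (Sum.inr (x0, 0))
                + ∑ c : C, redDem pos neg D (wf c) (Sum.inr (x0, 0))
                ≤ redCap D (Sum.inr (x0, (0 : Fin 3)))
            by_cases hx0 : σ x0 = true
            · have hL : ∀ x : X,
                  redDem pos neg D (Sum.inl (x, σ x)) (Sum.inr (x0, 0)) =
                    if x = x0 then D else 0 := by
                intro x
                by_cases hx : x = x0
                · subst hx; simp [redDem, hx0]
                · simp [redDem, Ne.symm hx, hx]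
              have hR : ∀ c : C, redDem pos neg D (wf c) (Sum.inr (x0, 0)) = 0 := by
                intro c
                rcases hwf c with ⟨x, h, hs, he⟩ | ⟨x, h, hs, he⟩ <;> rw [he]
                · simp [redDem]
                · by_cases hxx : x0 = x
                  · subst hxx; rw [hx0] at hs; exact absurd hs (by simp)
                  · simp [redDem, hxx]
              simp only [hL, hR, Finset.sum_const_zero, Finset.sum_ite_eq', Finset.mem_univ,
                if_true, add_zero]
              simp [redCap]
            · have hx0' : σ x0 = false := by simpa using hx0
              have hL : ∀ x : X,
                  redDem pos neg D (Sum.inl (x, σ x)) (Sum.inr (x0, 0)) = 0 := by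
                intro x
                by_cases hx : x = x0
                · subst hx; simp [redDem, hx0']
                · simp [redDem, Ne.symm hx, hx]
              have hR : ∀ c : C, redDem pos neg D (wf c) (Sum.inr (x0, 0)) ≤
                  if x0 ∈ neg c then 1 else 0 := by
                intro c
                rcases hwf c with ⟨x, h, hs, he⟩ | ⟨x, h, hs, he⟩ <;> rw [he]
                · simp [redDem]
                · by_cases hxx : x0 = x
                  · subst hxx; simp [redDem, h]
                  · simp [redDem, hxx]
              simp only [hL, Finset.sum_const_zero, zero_add]
              calc ∑ c, redDem pos neg D (wf c) (Sum.inr (x0, 0))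
                  ≤ ∑ c, if x0 ∈ neg c then 1 else 0 :=
                    Finset.sum_le_sum (fun c _ => hR c)
                _ = (Finset.univ.filter fun c : C => x0 ∈ neg c).card := by
                    simp [Finset.sum_ite, Finset.sum_const]
                _ ≤ (Finset.univ.filter fun c : C => x0 ∈ pos c ∨ x0 ∈ neg c).card := by
                    apply Finset.card_le_card
                    intro c hc
                    simp only [Finset.mem_filter, Finset.mem_univ, true_and] at hc ⊢
                    exact Or.inr hc
                _ ≤ D := hD x0
                _ = redCap D (Sum.inr (x0, 0)) := rfl
        -- i = 1 : vertex f_{x0}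
          · show ∑ x : X, redDem pos neg D (Sum.inl (x, σ x)) (Sum.inr (x0, 1))
                + ∑ c : C, redDem pos neg D (wf c) (Sum.inr (x0, 1))
                ≤ redCap D (Sum.inr (x0, (1 : Fin 3)))
            by_cases hx0 : σ x0 = false
            · have hL : ∀ x : X,
                  redDem pos neg D (Sum.inl (x, σ x)) (Sum.inr (x0, 1)) =
                    if x = x0 then D else 0 := by
                intro x
                by_cases hx : x = x0
                · subst hx; simp [redDem, hx0]
                · simp [redDem, Ne.symm hx, hx]
              have hR : ∀ c : C, redDem pos neg D (wf c) (Sum.inr (x0, 1)) = 0 := by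
                intro c
                rcases hwf c with ⟨x, h, hs, he⟩ | ⟨x, h, hs, he⟩ <;> rw [he]
                · by_cases hxx : x0 = x
                  · subst hxx; rw [hx0] at hs; exact absurd hs (by simp)
                  · simp [redDem, hxx]
                · simp [redDem]
              simp only [hL, hR, Finset.sum_const_zero, Finset.sum_ite_eq', Finset.mem_univ,
                if_true, add_zero]
              simp [redCap]
            · have hx0' : σ x0 = true := by simpa using hx0
              have hL : ∀ x : X,
                  redDem pos neg D (Sum.inl (x, σ x)) (Sum.inr (x0, 1)) = 0 := by
                intro x
                by_cases hx : x = x0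
                · subst hx; simp [redDem, hx0']
                · simp [redDem, Ne.symm hx, hx]
              have hR : ∀ c : C, redDem pos neg D (wf c) (Sum.inr (x0, 1)) ≤
                  if x0 ∈ pos c then 1 else 0 := by
                intro c
                rcases hwf c with ⟨x, h, hs, he⟩ | ⟨x, h, hs, he⟩ <;> rw [he]
                · by_cases hxx : x0 = x
                  · subst hxx; simp [redDem, h]
                  · simp [redDem, hxx]
                · simp [redDem]
              simp only [hL, Finset.sum_const_zero, zero_add]
              calc ∑ c, redDem pos neg D (wf c) (Sum.inr (x0, 1))
                  ≤ ∑ c, if x0 ∈ pos c then 1 else 0 :=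
                    Finset.sum_le_sum (fun c _ => hR c)
                _ = (Finset.univ.filter fun c : C => x0 ∈ pos c).card := by
                    simp [Finset.sum_ite, Finset.sum_const]
                _ ≤ (Finset.univ.filter fun c : C => x0 ∈ pos c ∨ x0 ∈ neg c).card := by
                    apply Finset.card_le_card
                    intro c hc
                    simp only [Finset.mem_filter, Finset.mem_univ, true_and] at hc ⊢
                    exact Or.inl hc
                _ ≤ D := hD x0
                _ = redCap D (Sum.inr (x0, 1)) := rfl
        -- i = 2 : vertex v_{x0}
          · show ∑ x : X, redDem pos neg D (Sum.inl (x, σ x)) (Sum.inr (x0, 2))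
                + ∑ c : C, redDem pos neg D (wf c) (Sum.inr (x0, 2))
                ≤ redCap D (Sum.inr (x0, (2 : Fin 3)))
            have hL : ∀ x : X,
                redDem pos neg D (Sum.inl (x, σ x)) (Sum.inr (x0, 2)) =
                  if x = x0 then D else 0 := by
              intro x
              by_cases hx : x = x0
              · subst hx; simp [redDem]
              · simp [redDem, Ne.symm hx, hx]
            have hR : ∀ c : C, redDem pos neg D (wf c) (Sum.inr (x0, 2)) = 0 := by
              intro c
              rcases hwf c with ⟨x, h, hs, he⟩ | ⟨x, h, hs, he⟩ <;> rw [he] <;> simp [redDem]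
            simp only [hL, hR, Finset.sum_const_zero, Finset.sum_ite_eq', Finset.mem_univ,
              if_true, add_zero]
            simp [redCap]
      · -- profit value
        rw [Finset.sum_union hdisj]
        have eA : ∑ e ∈ A, redProfit pos neg D e
            = ∑ x : X, redProfit pos neg D (Sum.inl (x, σ x)) := by
          rw [hA]; exact Finset.sum_image (fun a _ b _ h => hA_inj h)
        have eB : ∑ e ∈ B, redProfit pos neg D e
            = ∑ c : C, redProfit pos neg D (wf c) := by
          rw [hB]; exact Finset.sum_image (fun a _ b _ h => hB_inj h)
        rw [eA, eB]
        have hPL : ∀ x : X, redProfit pos neg D (Sum.inl (x, σ x) : RedEdge X C pos neg) = D :=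
          fun _ => rfl
        have hPR : ∀ c : C, redProfit pos neg D (wf c) = 1 := by
          intro c
          rcases hwf c with ⟨x, h, hs, he⟩ | ⟨x, h, hs, he⟩ <;> rw [he] <;> rfl
        simp [hPL, hPR, Finset.sum_const, mul_comm]
    · rintro n ⟨F, hF, rfl⟩
      exact profit_le hD1 hF
  · rintro ⟨⟨F, hF, hsum⟩, -⟩
    have : DecidablePred (fun e : RedEdge X C pos neg => e.isLeft = true) := fun e => instDecidableEqBool _ _
    rw [sum_profit_eq (F := F)] at hsum
    have hFl_le := card_left_le hD1 hF
    have hFr_le := card_right_le hF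
    have hDF : D * (F.filter (fun e => e.isLeft = true)).card ≤ D * Fintype.card X :=
      Nat.mul_le_mul_left _ hFl_le
    have hFr : (F.filter (fun e => ¬ e.isLeft = true)).card = Fintype.card C := by omega
    have hFl : (F.filter (fun e => e.isLeft = true)).card = Fintype.card X := by
      have : D * (F.filter (fun e => e.isLeft = true)).card = D * Fintype.card X := by omega
      exact Nat.eq_of_mul_eq_mul_left hD1 this
    -- every variable has a chosen left edge
    have himg : (F.filter (fun e => e.isLeft = true)).image varOf = Finset.univ := by
      apply Finset.eq_univ_of_card
      rw [Finset.card_image_of_injOn (left_injOn hD1 hF), hFl]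
    have hb : ∀ x : X, ∃ b : Bool, Sum.inl (x, b) ∈ F := by
      intro x
      have hx : x ∈ (F.filter (fun e => e.isLeft = true)).image varOf := by
        rw [himg]; exact Finset.mem_univ x
      obtain ⟨e, he, hv⟩ := Finset.mem_image.mp hx
      have hmem := Finset.mem_filter.mp he
      obtain ⟨⟨x', b⟩, rfl⟩ := Sum.isLeft_iff.mp hmem.2
      have : x' = x := hv
      exact ⟨b, this ▸ hmem.1⟩
    choose σ hσ using hb
    refine ⟨σ, ?_⟩
    intro c
    -- every clause has a chosen unit edge
    have himgC : (F.filter (fun e => ¬ e.isLeft = true)).image clOpt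
        = (Finset.univ : Finset C).image some := by
      apply Finset.eq_of_subset_of_card_le
      · intro o ho
        obtain ⟨e, he, rfl⟩ := Finset.mem_image.mp ho
        obtain ⟨c', hc'⟩ := right_some (Finset.mem_filter.mp he).2
        rw [hc']
        exact Finset.mem_image_of_mem _ (Finset.mem_univ c')
      · rw [Finset.card_image_of_injOn (right_injOn hF), hFr,
          Finset.card_image_of_injective _ (Option.some_injective C), Finset.card_univ]
    have hc : some c ∈ (F.filter (fun e => ¬ e.isLeft = true)).image clOpt := by
      rw [himgC]
      exact Finset.mem_image_of_mem _ (Finset.mem_univ c)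
    obtain ⟨e, he, hcl⟩ := Finset.mem_image.mp hc
    have heF : e ∈ F := (Finset.mem_filter.mp he).1
    rcases e with e | e
    · exact absurd hcl (by simp [clOpt])
    rcases e with q | q
    · -- positive literal edge u_c f_x
      have hcq : q.1.1 = c := by simpa [clOpt] using hcl
      left
      refine ⟨q.1.2, hcq ▸ q.2, ?_⟩
      by_contra hb'
      have hbf : σ q.1.2 = false := by simpa using hb'
      have h1 : Sum.inl (q.1.2, false) ∈ F := hbf ▸ hσ q.1.2
      have h2 : (Sum.inr (Sum.inl q) : RedEdge X C pos neg) ∈ F := heF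
      have hp := pair_le hF h1 h2 (fun h => by cases h) (Sum.inr (q.1.2, 1))
      simp [redDem, redCap] at hp
    · -- negative literal edge u_c t_x
      have hcq : q.1.1 = c := by simpa [clOpt] using hcl
      right
      refine ⟨q.1.2, hcq ▸ q.2, ?_⟩
      by_contra hb'
      have hbt : σ q.1.2 = true := by simpa using hb'
      have h1 : Sum.inl (q.1.2, true) ∈ F := hbt ▸ hσ q.1.2
      have h2 : (Sum.inr (Sum.inr q) : RedEdge X C pos neg) ∈ F := heF
      have hp := pair_le hF h1 h2 (fun h => by cases h) (Sum.inr (q.1.2, 0))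
      simp [redDem, redCap] at hp
end
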